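/- Let H be an n_r × n_t complex matrix and Δ an n_t × T complex matrix with T ≥ n_t. Let λ₁ ≥ ... ≥ λ_{n_t} ≥ 0 be the eigenvalues of H†H and 0 ≤ l₁ ≤ ... ≤ l_{n_t} the eigenvalues of ΔΔ†. Then Tr(H Δ Δ† H†) ≥ Σ_{i=1}^{n_t} λᵢ lᵢ. -/

import Mathlib

open Matrix Finset


lemma conv (n k : ℕ) (hk : k ≤ n) (d : Fin n → ℝ) :
    ∑ j ∈ Finset.univ.filter (fun j : Fin n => (j : ℕ) < k), d j
      = ∑ i ∈ Finset.range k, (if h : i < n then d ⟨i, h⟩ else 0) := by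
  rw [Finset.sum_filter]
  have h1 : ∀ j : Fin n, (if (j : ℕ) < k then d j else 0)
      = (fun i : ℕ => if i < k then (if h : i < n then d ⟨i, h⟩ else 0) else 0) (j : ℕ) := by
    intro j; simp [j.isLt]
  rw [Finset.sum_congr rfl (fun j _ => h1 j),
    Fin.sum_univ_eq_sum_range (fun i : ℕ => if i < k then (if h : i < n then d ⟨i, h⟩ else 0) else 0) n,
    ← Finset.sum_filter]
  congr 1
  ext i; simp only [Finset.mem_filter, Finset.mem_range]
  omega

lemma abelA (n : ℕ) (f g : ℕ → ℝ) (hf : ∀ i j, i ≤ j → j < n → f j ≤ f i)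
    (hpart : ∀ k, k ≤ n → 0 ≤ ∑ i ∈ Finset.range k, g i)
    (htot : ∑ i ∈ Finset.range n, g i = 0) :
    0 ≤ ∑ i ∈ Finset.range n, f i * g i := by
  have hbp := Finset.sum_range_by_parts f g n
  simp only [smul_eq_mul] at hbp
  rw [hbp, htot, mul_zero, zero_sub, Left.nonneg_neg_iff]
  apply Finset.sum_nonpos
  intro i hi
  simp only [Finset.mem_range] at hi
  have h1 : f (i+1) - f i ≤ 0 := by
    have := hf i (i+1) (Nat.le_succ i) (by omega)
    linarith
  exact mul_nonpos_of_nonpos_of_nonneg h1 (hpart (i+1) (by omega))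

lemma lemA (n : ℕ) (lam : Fin n → ℝ) (hlam : Antitone lam) (d : Fin n → ℝ)
    (hpart : ∀ k, k ≤ n →
      0 ≤ ∑ j ∈ Finset.univ.filter (fun j : Fin n => (j : ℕ) < k), d j)
    (htot : ∑ j, d j = 0) : 0 ≤ ∑ i, lam i * d i := by
  set f : ℕ → ℝ := fun i => if h : i < n then lam ⟨i, h⟩ else 0 with hfdef
  set g : ℕ → ℝ := fun i => if h : i < n then d ⟨i, h⟩ else 0 with hgdef
  have hfin : ∑ i, lam i * d i = ∑ i ∈ Finset.range n, f i * g i := by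
    rw [← Fin.sum_univ_eq_sum_range (fun i => f i * g i) n]
    apply Finset.sum_congr rfl
    intro j _
    simp [hfdef, hgdef, j.isLt]
  rw [hfin]
  apply abelA
  · intro i j hij hj
    simp only [hfdef]
    rw [dif_pos hj, dif_pos (lt_of_le_of_lt hij hj)]
    exact hlam hij
  · intro k hk
    rw [← conv n k hk d]
    exact hpart k hk
  · rw [← conv n n le_rfl d]
    simpa using htot

lemma card_filter_lt (n k : ℕ) (hk : k ≤ n) :
    (Finset.univ.filter (fun j : Fin n => (j : ℕ) < k)).card = k := by
  have : (Finset.univ.filter (fun j : Fin n => (j : ℕ) < k)) =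
      (Finset.range k).attachFin (fun m hm => lt_of_lt_of_le (Finset.mem_range.mp hm) hk) := by
    ext j
    simp [Finset.mem_attachFin]
  rw [this, Finset.card_attachFin, Finset.card_range]

lemma lemC (n k : ℕ) (hk : k ≤ n) (l : Fin n → ℝ) (hl : Monotone l)
    (t : Fin n → ℝ) (h0 : ∀ j, 0 ≤ t j) (h1 : ∀ j, t j ≤ 1)
    (hsum : ∑ j, t j = k) :
    ∑ j ∈ Finset.univ.filter (fun j : Fin n => (j : ℕ) < k), l j ≤ ∑ j, l j * t j := by
  set χ : Fin n → ℝ := fun j => if (j : ℕ) < k then 1 else 0 with hχ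
  have hχsum : ∑ j, χ j = k := by
    rw [hχ]
    rw [Finset.sum_ite, Finset.sum_const, Finset.sum_const]
    simp [card_filter_lt n k hk]
  have hfilter : ∑ j ∈ Finset.univ.filter (fun j : Fin n => (j : ℕ) < k), l j
      = ∑ j, l j * χ j := by
    rw [Finset.sum_filter]
    congr 1; ext j
    by_cases h : (j : ℕ) < k <;> simp [hχ, h]
  rw [hfilter]
  rcases eq_or_lt_of_le hk with rfl | hkn
  · -- k = n : t must be identically 1
    have ht1 : ∀ j, t j = 1 := by
      have hz : ∑ j : Fin k, (1 - t j) = 0 := by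
        rw [Finset.sum_sub_distrib, hsum]; simp
      intro j
      have := (Finset.sum_eq_zero_iff_of_nonneg
        (fun j _ => by linarith [h1 j])).mp hz j (Finset.mem_univ j)
      linarith
    have hχ1 : ∀ j : Fin k, χ j = 1 := fun j => by simp [hχ, j.isLt]
    apply le_of_eq
    congr 1; ext j; rw [ht1 j, hχ1 j]
  · -- k < n
    set p : Fin n := ⟨k, hkn⟩ with hp
    have key : 0 ≤ ∑ j, (l j - l p) * (t j - χ j) := by
      apply Finset.sum_nonneg
      intro j _
      by_cases h : (j : ℕ) < k
      · have h1' : l j ≤ l p := hl (by simp [hp, Fin.le_def]; omega)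
        have h2' : t j - χ j ≤ 0 := by simp [hχ, h]; linarith [h1 j]
        nlinarith [h1 j]
      · have h1' : l p ≤ l j := hl (by simp [hp, Fin.le_def]; omega)
        have h2' : 0 ≤ t j - χ j := by simp [hχ, h]; exact h0 j
        exact mul_nonneg (by linarith) h2'
    have expand : ∑ j, (l j - l p) * (t j - χ j)
        = ∑ j, l j * t j - ∑ j, l j * χ j - l p * (∑ j, t j - ∑ j, χ j) := by
      simp only [sub_mul, mul_sub]
      rw [Finset.sum_sub_distrib, Finset.sum_sub_distrib, Finset.sum_sub_distrib,
        ← Finset.mul_sum, ← Finset.mul_sum]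
      ring
    rw [expand, hsum, hχsum] at key
    linarith


lemma core (n : ℕ) (lam l : Fin n → ℝ) (hlam : Antitone lam) (hl : Monotone l)
    (q : Fin n → Fin n → ℝ) (hq0 : ∀ i j, 0 ≤ q i j)
    (hrow : ∀ i, ∑ j, q i j = 1) (hcol : ∀ j, ∑ i, q i j = 1) :
    ∑ i, lam i * l i ≤ ∑ i, ∑ j, lam i * l j * q i j := by
  set c : Fin n → ℝ := fun i => ∑ j, l j * q i j with hc
  have hinner : ∀ i : Fin n, ∑ j, lam i * l j * q i j = lam i * c i := by
    intro i; rw [hc, Finset.mul_sum]; congr 1; ext j; ring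
  rw [Finset.sum_congr rfl (fun i _ => hinner i)]
  have key : 0 ≤ ∑ i, lam i * (c i - l i) := by
    apply lemA n lam hlam
    · intro k hk
      have hsplit : ∑ j ∈ Finset.univ.filter (fun j : Fin n => (j : ℕ) < k), (c j - l j)
          = (∑ j ∈ Finset.univ.filter (fun j : Fin n => (j : ℕ) < k), c j)
            - ∑ j ∈ Finset.univ.filter (fun j : Fin n => (j : ℕ) < k), l j :=
        Finset.sum_sub_distrib _ _
      rw [hsplit, sub_nonneg]
      -- partial sum of c over the first k indices
      set K := Finset.univ.filter (fun j : Fin n => (j : ℕ) < k) with hK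
      set t : Fin n → ℝ := fun j => ∑ i ∈ K, q i j with ht
      have hKcard : K.card = k := by
        have : K = (Finset.range k).attachFin
            (fun m hm => lt_of_lt_of_le (Finset.mem_range.mp hm) hk) := by
          ext j; simp [hK, Finset.mem_attachFin]
        rw [this, Finset.card_attachFin, Finset.card_range]
      have hcK : ∑ i ∈ K, c i = ∑ j, l j * t j := by
        simp only [hc, ht]
        rw [Finset.sum_comm]
        congr 1; ext j; rw [Finset.mul_sum]
      rw [hcK]
      apply lemC n k hk l hl t
      · intro j; exact Finset.sum_nonneg fun i _ => hq0 i j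
      · intro j
        calc t j ≤ ∑ i, q i j :=
              Finset.sum_le_sum_of_subset_of_nonneg (Finset.subset_univ K)
                (fun i _ _ => hq0 i j)
          _ = 1 := hcol j
      · simp only [ht]
        rw [Finset.sum_comm]
        calc ∑ i ∈ K, ∑ j, q i j = ∑ i ∈ K, 1 := by
              apply Finset.sum_congr rfl; intro i _; exact hrow i
          _ = k := by rw [Finset.sum_const, hKcard]; simp
    · rw [Finset.sum_sub_distrib, sub_eq_zero]
      rw [hc]
      rw [Finset.sum_comm]
      calc ∑ j, ∑ i, l j * q i j = ∑ j, l j * ∑ i, q i j := by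
            congr 1; ext j; rw [Finset.mul_sum]
        _ = ∑ j, l j := by simp [hcol]
  have : ∑ i, lam i * (c i - l i) = ∑ i, lam i * c i - ∑ i, lam i * l i := by
    rw [← Finset.sum_sub_distrib]; congr 1; ext i; ring
  rw [this] at key
  linarith


open Complex in
lemma trace_diag_re (n : ℕ) (d e : Fin n → ℝ) (M : Matrix (Fin n) (Fin n) ℂ) :
    (Matrix.trace (diagonal (fun i => (d i : ℂ)) * M * diagonal (fun j => (e j : ℂ)) * Mᴴ)).re
      = ∑ i, ∑ j, d i * e j * Complex.normSq (M i j) := by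
  have hentry : ∀ i : Fin n,
      (diagonal (fun i => (d i : ℂ)) * M * diagonal (fun j => (e j : ℂ)) * Mᴴ) i i
      = ∑ j, ((d i * e j * Complex.normSq (M i j) : ℝ) : ℂ) := by
    intro i
    rw [Matrix.mul_apply]
    congr 1; ext j
    rw [Matrix.mul_diagonal, Matrix.diagonal_mul, Matrix.conjTranspose_apply]
    push_cast
    rw [show (d i : ℂ) * M i j * (e j : ℂ) * star (M i j)
        = (d i : ℂ) * (e j : ℂ) * (M i j * star (M i j)) by ring]
    rw [Complex.star_def, Complex.mul_conj]
  rw [Matrix.trace]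
  unfold Matrix.diag
  rw [Finset.sum_congr rfl (fun i _ => hentry i)]
  push_cast
  simp

lemma unitary_normSq_row (n : ℕ) (M : Matrix (Fin n) (Fin n) ℂ)
    (h : M * Mᴴ = 1) (i : Fin n) : ∑ j, Complex.normSq (M i j) = 1 := by
  have h1 : (M * Mᴴ) i i = 1 := by rw [h]; simp [Matrix.one_apply]
  rw [Matrix.mul_apply] at h1
  have h2 : ∀ j, M i j * Mᴴ j i = ((Complex.normSq (M i j) : ℝ) : ℂ) := by
    intro j
    rw [Matrix.conjTranspose_apply, Complex.star_def, Complex.mul_conj]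
  rw [Finset.sum_congr rfl (fun j _ => h2 j)] at h1
  have := congrArg Complex.re h1
  simpa using this

lemma unitary_normSq_col (n : ℕ) (M : Matrix (Fin n) (Fin n) ℂ)
    (h : Mᴴ * M = 1) (j : Fin n) : ∑ i, Complex.normSq (M i j) = 1 := by
  have h1 : (Mᴴ * M) j j = 1 := by rw [h]; simp [Matrix.one_apply]
  rw [Matrix.mul_apply] at h1
  have h2 : ∀ i, Mᴴ j i * M i j = ((Complex.normSq (M i j) : ℝ) : ℂ) := by
    intro i
    rw [Matrix.conjTranspose_apply, Complex.star_def, mul_comm, Complex.mul_conj]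
  rw [Finset.sum_congr rfl (fun i _ => h2 i)] at h1
  have := congrArg Complex.re h1
  simpa using this

theorem stmt_10 (nr nt T : ℕ) (hT : nt ≤ T)
    (H : Matrix (Fin nr) (Fin nt) ℂ) (Δ : Matrix (Fin nt) (Fin T) ℂ)
    (lam l : Fin nt → ℝ) (hlam : Antitone lam) (hl : Monotone l)
    (hperm₁ : ∃ σ : Equiv.Perm (Fin nt),
      lam = (isHermitian_conjTranspose_mul_self H).eigenvalues ∘ σ)
    (hperm₂ : ∃ σ : Equiv.Perm (Fin nt),
      l = (isHermitian_mul_conjTranspose_self Δ).eigenvalues ∘ σ) :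
    ∑ i, lam i * l i ≤ (Matrix.trace (H * Δ * (H * Δ)ᴴ)).re := by
  obtain ⟨σ, hσ⟩ := hperm₁
  obtain ⟨τ, hτ⟩ := hperm₂
  set hA := isHermitian_conjTranspose_mul_self H with hAdef
  set hB := isHermitian_mul_conjTranspose_self Δ with hBdef
  set U : Matrix (Fin nt) (Fin nt) ℂ := (hA.eigenvectorUnitary : Matrix (Fin nt) (Fin nt) ℂ) with hUdef
  set W : Matrix (Fin nt) (Fin nt) ℂ := (hB.eigenvectorUnitary : Matrix (Fin nt) (Fin nt) ℂ) with hWdef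
  set M : Matrix (Fin nt) (Fin nt) ℂ := star U * W with hMdef
  have hUU : star U * U = 1 := Matrix.mem_unitaryGroup_iff'.mp (hA.eigenvectorUnitary).2
  have hUU' : U * star U = 1 := Matrix.mem_unitaryGroup_iff.mp (hA.eigenvectorUnitary).2
  have hWW : star W * W = 1 := Matrix.mem_unitaryGroup_iff'.mp (hB.eigenvectorUnitary).2
  have hWW' : W * star W = 1 := Matrix.mem_unitaryGroup_iff.mp (hB.eigenvectorUnitary).2
  have hMM : M * star M = 1 := by
    rw [hMdef, Matrix.star_mul, star_star]
    calc star U * W * (star W * U) = star U * (W * star W) * U := by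
          simp only [Matrix.mul_assoc]
      _ = 1 := by rw [hWW', Matrix.mul_one, hUU]
  have hMM' : star M * M = 1 := by
    rw [hMdef, Matrix.star_mul, star_star]
    calc star W * U * (star U * W) = star W * (U * star U) * W := by
          simp only [Matrix.mul_assoc]
      _ = 1 := by rw [hUU', Matrix.mul_one, hWW]
  -- trace identity
  have t1 : Matrix.trace (H * Δ * (H * Δ)ᴴ) = Matrix.trace ((Hᴴ * H) * (Δ * Δᴴ)) := by
    rw [conjTranspose_mul, Matrix.trace_mul_comm]
    rw [show Δᴴ * Hᴴ * (H * Δ) = Δᴴ * (Hᴴ * H * Δ) by rw [Matrix.mul_assoc, Matrix.mul_assoc]]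
    rw [Matrix.trace_mul_comm]
    rw [show Hᴴ * H * Δ * Δᴴ = Hᴴ * H * (Δ * Δᴴ) by rw [Matrix.mul_assoc]]
  have hdiagA : diagonal (RCLike.ofReal ∘ hA.eigenvalues)
      = diagonal (fun i => (hA.eigenvalues i : ℂ)) := rfl
  have hdiagB : diagonal (RCLike.ofReal ∘ hB.eigenvalues)
      = diagonal (fun i => (hB.eigenvalues i : ℂ)) := rfl
  have t2 : Matrix.trace ((Hᴴ * H) * (Δ * Δᴴ))
      = Matrix.trace (diagonal (fun i => (hA.eigenvalues i : ℂ)) * M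
          * diagonal (fun j => (hB.eigenvalues j : ℂ)) * Mᴴ) := by
    conv_lhs => rw [hA.spectral_theorem, hB.spectral_theorem]
    rw [hdiagA, hdiagB]
    rw [Unitary.conjStarAlgAut_apply, Unitary.conjStarAlgAut_apply, ← hUdef, ← hWdef]
    rw [show U * diagonal (fun i => (hA.eigenvalues i : ℂ)) * star U
          * (W * diagonal (fun j => (hB.eigenvalues j : ℂ)) * star W)
        = U * (diagonal (fun i => (hA.eigenvalues i : ℂ)) * (star U
          * (W * (diagonal (fun j => (hB.eigenvalues j : ℂ)) * star W)))) by
      simp only [Matrix.mul_assoc]]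
    rw [Matrix.trace_mul_comm]
    congr 1
    rw [hMdef, ← Matrix.star_eq_conjTranspose, Matrix.star_mul, star_star]
    simp only [Matrix.mul_assoc]
  have t3 : (Matrix.trace (H * Δ * (H * Δ)ᴴ)).re
      = ∑ i, ∑ j, hA.eigenvalues i * hB.eigenvalues j * Complex.normSq (M i j) := by
    rw [t1, t2, trace_diag_re]
  rw [t3]
  -- apply the core inequality
  set q : Fin nt → Fin nt → ℝ := fun i j => Complex.normSq (M (σ i) (τ j)) with hqdef
  have hrow : ∀ i, ∑ j, q i j = 1 := by
    intro i
    rw [hqdef]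
    rw [Equiv.sum_comp τ (fun j => Complex.normSq (M (σ i) j))]
    exact unitary_normSq_row nt M (by rw [← Matrix.star_eq_conjTranspose]; exact hMM) (σ i)
  have hcol : ∀ j, ∑ i, q i j = 1 := by
    intro j
    rw [hqdef]
    rw [Equiv.sum_comp σ (fun i => Complex.normSq (M i (τ j)))]
    exact unitary_normSq_col nt M (by rw [← Matrix.star_eq_conjTranspose]; exact hMM') (τ j)
  have hmain := core nt lam l hlam hl q (fun i j => Complex.normSq_nonneg _) hrow hcol
  refine hmain.trans (le_of_eq ?_)
  calc ∑ i, ∑ j, lam i * l j * q i j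
      = ∑ i, ∑ j, hA.eigenvalues (σ i) * hB.eigenvalues (τ j)
          * Complex.normSq (M (σ i) (τ j)) := by
        apply Finset.sum_congr rfl; intro i _
        apply Finset.sum_congr rfl; intro j _
        rw [hσ, hτ, hqdef]; rfl
    _ = ∑ i, ∑ j, hA.eigenvalues i * hB.eigenvalues j * Complex.normSq (M i j) := by
        rw [← Equiv.sum_comp σ
          (fun i => ∑ j, hA.eigenvalues i * hB.eigenvalues j * Complex.normSq (M i j))]
        apply Finset.sum_congr rfl; intro i _
        rw [← Equiv.sum_comp τ
          (fun j => hA.eigenvalues (σ i) * hB.eigenvalues j * Complex.normSq (M (σ i) j))]
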